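/- Let C := (ℝ × {0}) ∪ {(0,1)} ⊆ ℝ² and let f : ℝ² → ℝ be defined by f(x) = 0 if x ∈ C and f(x) = 1 otherwise. Then: (i) f is lower semicontinuous; (ii) the level convex envelope of f satisfies f^{lc}(x) = 0 if x ∈ D and f^{lc}(x) = 1 otherwise, where D := (ℝ × [0,1)) ∪ {(0,1)}; (iii) f^{lc} is not lower semicontinuous. In particular, there exists a lower semicontinuous function on ℝ² whose level convex envelope fails to be lower semicontinuous, so (f^{lc})^{ls} can be strictly smaller than (f^{ls})^{lc}. -/

import Mathlib

open Filter Topology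

variable {X : Type*}

/-- A function into the extended reals is level convex if along segments its value
is at most the maximum of the values at the endpoints. -/
def LevelConvex [AddCommGroup X] [Module ℝ X] (F : X → EReal) : Prop :=
  ∀ x y : X, ∀ t : ℝ, 0 < t → t < 1 →
    F (t • x + (1 - t) • y) ≤ max (F x) (F y)

/-- The lower semicontinuous envelope `Γ_τ(F)`: the pointwise supremum of all
lower semicontinuous functions below `F`. -/
noncomputable def lscEnv [TopologicalSpace X] (F : X → EReal) : X → EReal :=
  fun x => ⨆ G : {G : X → EReal // LowerSemicontinuous G ∧ G ≤ F}, (G : X → EReal) x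

/-- The level convex envelope `F^{lc}`: the pointwise supremum of all level convex
functions below `F`. -/
noncomputable def lcEnv [AddCommGroup X] [Module ℝ X] (F : X → EReal) : X → EReal :=
  fun x => ⨆ G : {G : X → EReal // LevelConvex G ∧ G ≤ F}, (G : X → EReal) x

/-- The lower semicontinuous level convex envelope `F^{lslc}`: the pointwise supremum
of all functions below `F` which are both lower semicontinuous and level convex. -/
noncomputable def lslcEnv [TopologicalSpace X] [AddCommGroup X] [Module ℝ X]
    (F : X → EReal) : X → EReal :=
  fun x => ⨆ G : {G : X → EReal // LowerSemicontinuous G ∧ LevelConvex G ∧ G ≤ F},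
    (G : X → EReal) x

open Classical in
theorem stmt11
    (C : Set (ℝ × ℝ)) (hC : C = {p : ℝ × ℝ | p.2 = 0} ∪ {((0 : ℝ), (1 : ℝ))})
    (D : Set (ℝ × ℝ))
    (hD : D = {p : ℝ × ℝ | 0 ≤ p.2 ∧ p.2 < 1} ∪ {((0 : ℝ), (1 : ℝ))})
    (f : ℝ × ℝ → EReal) (hf : f = fun p => if p ∈ C then 0 else 1) :
    LowerSemicontinuous f ∧
      (lcEnv f = fun p => if p ∈ D then 0 else 1) ∧
      ¬ LowerSemicontinuous (lcEnv f) ∧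
      ∃ p : ℝ × ℝ, lscEnv (lcEnv f) p < lcEnv (lscEnv f) p := by
  classical
  set g : ℝ × ℝ → EReal := fun p => if p ∈ D then 0 else 1 with hg
  -- basic value lemmas
  have hfval0 : ∀ p, p ∈ C → f p = 0 := fun p hp => by rw [hf]; exact if_pos hp
  have hfval1 : ∀ p, p ∉ C → f p = 1 := fun p hp => by rw [hf]; exact if_neg hp
  have hgval0 : ∀ p, p ∈ D → g p = 0 := fun p hp => if_pos hp
  have hgval1 : ∀ p, p ∉ D → g p = 1 := fun p hp => if_neg hp
  have hfle1 : ∀ p, f p ≤ 1 := by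
    intro p; rw [hf]; dsimp only; split_ifs
    · exact zero_le_one
    · exact le_refl _
  have hgle1 : ∀ p, g p ≤ 1 := by
    intro p; rw [hg]; dsimp only; split_ifs
    · exact zero_le_one
    · exact le_refl _
  have hfge0 : ∀ p, (0:EReal) ≤ f p := by
    intro p; rw [hf]; dsimp only; split_ifs
    · exact le_refl _
    · exact zero_le_one
  have hCD : C ⊆ D := by
    rw [hC, hD]
    rintro p (hp | hp)
    · exact Or.inl ⟨le_of_eq hp.symm, by rw [Set.mem_setOf_eq] at hp; rw [hp]; norm_num⟩
    · exact Or.inr hp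
  have hgf : g ≤ f := by
    intro p
    by_cases hp : p ∈ C
    · rw [hfval0 p hp, hgval0 p (hCD hp)]
    · rw [hfval1 p hp]; exact hgle1 p
  -- C is closed
  have hCclosed : IsClosed C := by
    rw [hC]
    exact (isClosed_eq continuous_snd continuous_const).union isClosed_singleton
  -- (i) f lower semicontinuous
  have h1 : LowerSemicontinuous f := by
    intro x y hy
    by_cases hx : x ∈ C
    · rw [hfval0 x hx] at hy
      filter_upwards with z
      exact lt_of_lt_of_le hy (hfge0 z)
    · rw [hfval1 x hx] at hy
      filter_upwards [hCclosed.isOpen_compl.mem_nhds hx] with z hz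
      rw [hfval1 z hz]; exact hy
  -- D is "convex" along open segments
  have hDconv : ∀ p q : ℝ × ℝ, p ∈ D → q ∈ D → ∀ t : ℝ, 0 < t → t < 1 →
      t • p + (1 - t) • q ∈ D := by
    rw [hD]
    rintro p q (hp | hp) (hq | hq) t ht0 ht1
    · left
      simp only [Set.mem_setOf_eq, Prod.snd_add, Prod.smul_snd, smul_eq_mul]
      obtain ⟨hp0, hp1⟩ := hp
      obtain ⟨hq0, hq1⟩ := hq
      constructor
      · have := mul_nonneg ht0.le hp0
        have := mul_nonneg (by linarith : (0:ℝ) ≤ 1 - t) hq0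
        linarith
      · nlinarith [mul_pos ht0 (by linarith : (0:ℝ) < 1 - p.2),
          mul_pos (by linarith : (0:ℝ) < 1 - t) (by linarith : (0:ℝ) < 1 - q.2)]
    · left
      rw [Set.mem_singleton_iff] at hq; subst hq
      simp only [Set.mem_setOf_eq, Prod.snd_add, Prod.smul_snd, smul_eq_mul]
      obtain ⟨hp0, hp1⟩ := hp
      constructor
      · nlinarith
      · nlinarith
    · left
      rw [Set.mem_singleton_iff] at hp; subst hp
      simp only [Set.mem_setOf_eq, Prod.snd_add, Prod.smul_snd, smul_eq_mul]
      obtain ⟨hq0, hq1⟩ := hq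
      constructor
      · nlinarith
      · nlinarith
    · right
      rw [Set.mem_singleton_iff] at hp hq ⊢; subst hp; subst hq
      ext
      · simp
      · simp only [Prod.snd_add, Prod.smul_snd, smul_eq_mul]
        simp
  -- g is level convex
  have hglc : LevelConvex g := by
    intro x y t ht0 ht1
    by_cases hx : x ∈ D
    · by_cases hy : y ∈ D
      · rw [hgval0 _ (hDconv x y hx hy t ht0 ht1)]
        exact le_max_of_le_left (le_of_eq (hgval0 x hx).symm)
      · exact (hgle1 _).trans (le_max_of_le_right (le_of_eq (hgval1 y hy).symm))
    · exact (hgle1 _).trans (le_max_of_le_left (le_of_eq (hgval1 x hx).symm))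
  -- any level convex G ≤ f satisfies G ≤ g
  have hub : ∀ G : ℝ × ℝ → EReal, LevelConvex G → G ≤ f → ∀ p, G p ≤ g p := by
    intro G hGlc hGf p
    by_cases hp : p ∈ D
    · rw [hgval0 p hp]
      rw [hD] at hp
      have hmem0 : ((0:ℝ), (1:ℝ)) ∈ C := by rw [hC]; exact Or.inr rfl
      rcases hp with hp | hp
      · obtain ⟨hp0, hp1⟩ := hp
        rcases eq_or_lt_of_le hp0 with h0 | h0
        · have hpC : p ∈ C := by rw [hC]; exact Or.inl h0.symm
          exact (hGf p).trans_eq (hfval0 p hpC)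
        · have hne : (1 : ℝ) - p.2 ≠ 0 := by linarith
          have key : p = p.2 • ((0:ℝ), (1:ℝ)) + (1 - p.2) • ((p.1 / (1 - p.2), (0:ℝ))) := by
            ext
            · simp only [Prod.fst_add, Prod.smul_fst, smul_eq_mul]
              field_simp
              ring
            · simp only [Prod.snd_add, Prod.smul_snd, smul_eq_mul]
              ring
          have hmemb : (p.1 / (1 - p.2), (0:ℝ)) ∈ C := by rw [hC]; exact Or.inl rfl
          have h2 := hGlc ((0:ℝ), (1:ℝ)) (p.1 / (1 - p.2), (0:ℝ)) p.2 h0 hp1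
          rw [← key] at h2
          refine h2.trans (max_le ?_ ?_)
          · exact (hGf _).trans_eq (hfval0 _ hmem0)
          · exact (hGf _).trans_eq (hfval0 _ hmemb)
      · have hpC : p ∈ C := by rw [hC]; exact Or.inr hp
        exact (hGf p).trans_eq (hfval0 p hpC)
    · rw [hgval1 p hp]
      exact (hGf p).trans (hfle1 p)
  -- (ii) lcEnv f = g
  have h2 : lcEnv f = g := by
    funext p
    apply le_antisymm
    · exact iSup_le fun G => hub G.1 G.2.1 G.2.2 p
    · exact le_iSup (fun (G : {G : ℝ × ℝ → EReal // LevelConvex G ∧ G ≤ f}) => G.1 p)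
        ⟨g, hglc, hgf⟩
  -- the approaching sequence
  have hseq : Filter.Tendsto (fun n : ℕ => ((1:ℝ), (1:ℝ) - 1/(n+1))) Filter.atTop
      (nhds ((1:ℝ), (1:ℝ))) := by
    refine Filter.Tendsto.prodMk_nhds tendsto_const_nhds ?_
    have := tendsto_one_div_add_atTop_nhds_zero_nat (𝕜 := ℝ)
    simpa using (tendsto_const_nhds.sub this)
  have hseqD : ∀ n : ℕ, ((1:ℝ), (1:ℝ) - 1/(n+1)) ∈ D := by
    intro n
    rw [hD]
    left
    have hn : (0:ℝ) < (n:ℝ) + 1 := by positivity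
    constructor
    · have : 1/((n:ℝ)+1) ≤ 1 := by rw [div_le_one hn]; linarith [Nat.cast_nonneg (α := ℝ) n]
      simp only [Set.mem_setOf_eq]; linarith
    · have : (0:ℝ) < 1/((n:ℝ)+1) := by positivity
      linarith
  have h11D : ((1:ℝ), (1:ℝ)) ∉ D := by
    rw [hD]
    rintro (h | h)
    · exact absurd h.2 (lt_irrefl 1)
    · rw [Set.mem_singleton_iff, Prod.ext_iff] at h
      exact one_ne_zero h.1
  -- (iii) lcEnv f is not lsc
  have h3 : ¬ LowerSemicontinuous (lcEnv f) := by
    intro h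
    have hval : lcEnv f ((1:ℝ), (1:ℝ)) = 1 := by rw [h2]; exact hgval1 _ h11D
    have := h ((1:ℝ), (1:ℝ)) 0 (by show (0:EReal) < _; rw [hval]; exact zero_lt_one)
    obtain ⟨n, hn⟩ := (hseq.eventually this).exists
    rw [h2, hgval0 _ (hseqD n)] at hn
    exact lt_irrefl _ hn
  refine ⟨h1, h2, h3, ((1:ℝ), (1:ℝ)), ?_⟩
  -- lscEnv f = f since f is lsc
  have hlsceq : lscEnv f = f := by
    funext x
    apply le_antisymm
    · exact iSup_le fun G => G.2.2 x
    · exact le_iSup (fun (G : {G : ℝ × ℝ → EReal // LowerSemicontinuous G ∧ G ≤ f}) => G.1 x)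
        ⟨f, h1, le_refl f⟩
  have hR : lcEnv (lscEnv f) ((1:ℝ), (1:ℝ)) = 1 := by
    rw [hlsceq, h2]; exact hgval1 _ h11D
  have hL : lscEnv (lcEnv f) ((1:ℝ), (1:ℝ)) ≤ 0 := by
    refine iSup_le fun G => ?_
    obtain ⟨G, hGlsc, hGle⟩ := G
    by_contra hpos
    push_neg at hpos
    have := hGlsc ((1:ℝ), (1:ℝ)) 0 hpos
    obtain ⟨n, hn⟩ := (hseq.eventually this).exists
    have : G ((1:ℝ), (1:ℝ) - 1/(n+1)) ≤ 0 := by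
      refine (hGle _).trans ?_
      rw [h2, hgval0 _ (hseqD n)]
    exact lt_irrefl _ (hn.trans_le this)
  calc lscEnv (lcEnv f) ((1:ℝ), (1:ℝ)) ≤ 0 := hL
    _ < 1 := zero_lt_one
    _ = lcEnv (lscEnv f) ((1:ℝ), (1:ℝ)) := hR.symm
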